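/- Let Y = D ∪ L ⊆ ℝ², where D = {(x,y) ∈ ℝ² : 9|y| ≤ 1/4 − |x|} and L = ([−π/2, −1/4] ∪ [1/4, π/2]) × {0}. Let 𝔫 be the measure on ℝ² that equals cos²(x) times one-dimensional Hausdorff measure restricted to L plus the measure with density (x,y) ↦ 9·cos²(x)/(2(1/4 − |x|)) with respect to two-dimensional Lebesgue measure restricted to D. Then the pushforward of 𝔫 under the first-coordinate projection (x,y) ↦ x is the measure on ℝ with density x ↦ cos²(x) with respect to Lebesgue measure restricted to the interval [−π/2, π/2]. -/

import Mathlib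

/- The pushforward of the measure `𝔫` (`cos²x` times 1d Hausdorff measure on `L` plus the
measure with density `9cos²x/(2(1/4-|x|))` w.r.t. 2d Lebesgue measure on `D`) under the
first-coordinate projection is the measure `cos²(x) dx` on `[-π/2, π/2]`. -/

open MeasureTheory Set Real

noncomputable section

/-- The set `D = {(x,y) : 9|y| ≤ 1/4 - |x|}`. -/
def setD : Set (ℝ × ℝ) := {p | 9 * |p.2| ≤ 1 / 4 - |p.1|}

/-- The set `L = ([-π/2,-1/4] ∪ [1/4,π/2]) × {0}`. -/
def lineLY : Set (ℝ × ℝ) :=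
  (Set.Icc (-(π / 2)) (-(1 / 4 : ℝ)) ∪ Set.Icc (1 / 4 : ℝ) (π / 2)) ×ˢ ({0} : Set ℝ)

/-- The reference measure `𝔫`. -/
def measN : Measure (ℝ × ℝ) :=
  ((μH[1]).restrict lineLY).withDensity (fun p => ENNReal.ofReal (Real.cos p.1 ^ 2)) +
    ((volume : Measure (ℝ × ℝ)).restrict setD).withDensity
      (fun p => ENNReal.ofReal (9 * Real.cos p.1 ^ 2 / (2 * (1 / 4 - |p.1|))))

/-- The base set of `L`. -/
def setS : Set ℝ := Set.Icc (-(π / 2)) (-(1 / 4 : ℝ)) ∪ Set.Icc (1 / 4 : ℝ) (π / 2)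

lemma embed_isometry : Isometry (fun x : ℝ => ((x, 0) : ℝ × ℝ)) := by
  apply Isometry.of_dist_eq
  intro x y
  simp [Prod.dist_eq]

lemma embed_measurable : Measurable (fun x : ℝ => ((x, 0) : ℝ × ℝ)) :=
  (continuous_id.prodMk continuous_const).measurable

lemma lineLY_eq_image : lineLY = (fun x : ℝ => ((x, 0) : ℝ × ℝ)) '' setS := by
  ext ⟨x, y⟩
  simp only [lineLY, setS, Set.mem_prod, Set.mem_singleton_iff, Set.mem_image]
  constructor
  · rintro ⟨hx, rfl⟩; exact ⟨x, hx, rfl⟩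
  · rintro ⟨z, hz, h⟩
    obtain ⟨rfl, rfl⟩ : z = x ∧ (0 : ℝ) = y := by
      constructor <;> [exact congrArg Prod.fst h; exact congrArg Prod.snd h]
    exact ⟨hz, rfl⟩

lemma hausdorff_restrict_eq :
    (μH[1] : Measure (ℝ × ℝ)).restrict lineLY =
      Measure.map (fun x : ℝ => ((x, 0) : ℝ × ℝ)) ((volume : Measure ℝ).restrict setS) := by
  ext A hA
  rw [Measure.map_apply embed_measurable hA, Measure.restrict_apply hA,
    Measure.restrict_apply (embed_measurable hA)]
  have himg : A ∩ lineLY = (fun x : ℝ => ((x, 0) : ℝ × ℝ)) ''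
      ((fun x : ℝ => ((x, 0) : ℝ × ℝ)) ⁻¹' A ∩ setS) := by
    rw [lineLY_eq_image, Set.image_preimage_inter]
  rw [himg, embed_isometry.hausdorffMeasure_image (Or.inl zero_le_one)]
  rw [← MeasureTheory.hausdorffMeasure_real]

lemma part1 :
    Measure.map Prod.fst
        (((μH[1] : Measure (ℝ × ℝ)).restrict lineLY).withDensity
          (fun p => ENNReal.ofReal (Real.cos p.1 ^ 2))) =
      ((volume : Measure ℝ).restrict setS).withDensity
        (fun x => ENNReal.ofReal (Real.cos x ^ 2)) := by
  ext A hA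
  rw [Measure.map_apply measurable_fst hA,
    withDensity_apply _ (measurable_fst hA), hausdorff_restrict_eq,
    setLIntegral_map (f := fun p : ℝ × ℝ => ENNReal.ofReal (Real.cos p.1 ^ 2))
      (measurable_fst hA)
      (ENNReal.measurable_ofReal.comp ((measurable_cos.comp measurable_fst).pow_const 2))
      embed_measurable,
    withDensity_apply _ hA]
  rfl

lemma setD_measurable : MeasurableSet setD := by
  apply measurableSet_le
  · exact (measurable_const.mul measurable_snd.abs)
  · exact (measurable_const.sub measurable_fst.abs)

lemma gD_measurable :
    Measurable (fun p : ℝ × ℝ =>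
      ENNReal.ofReal (9 * Real.cos p.1 ^ 2 / (2 * (1 / 4 - |p.1|)))) := by
  apply ENNReal.measurable_ofReal.comp
  apply Measurable.div
  · exact measurable_const.mul ((measurable_cos.comp measurable_fst).pow_const 2)
  · exact measurable_const.mul (measurable_const.sub measurable_fst.abs)

lemma part2 :
    Measure.map Prod.fst
        (((volume : Measure (ℝ × ℝ)).restrict setD).withDensity
          (fun p => ENNReal.ofReal (9 * Real.cos p.1 ^ 2 / (2 * (1 / 4 - |p.1|))))) =
      ((volume : Measure ℝ).restrict (Set.Icc (-(1 / 4 : ℝ)) (1 / 4))).withDensity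
        (fun x => ENNReal.ofReal (Real.cos x ^ 2)) := by
  set g : ℝ × ℝ → ENNReal :=
    fun p => ENNReal.ofReal (9 * Real.cos p.1 ^ 2 / (2 * (1 / 4 - |p.1|))) with hg
  ext A hA
  rw [Measure.map_apply measurable_fst hA, withDensity_apply _ (measurable_fst hA),
    Measure.restrict_restrict (measurable_fst hA), withDensity_apply _ hA,
    Measure.restrict_restrict hA]
  have hBmeas : MeasurableSet (Prod.fst ⁻¹' A ∩ setD) :=
    (measurable_fst hA).inter setD_measurable
  rw [← lintegral_indicator hBmeas, ← lintegral_indicator (hA.inter measurableSet_Icc)]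
  rw [MeasureTheory.Measure.volume_eq_prod, lintegral_prod _
    ((gD_measurable.indicator hBmeas).aemeasurable)]
  apply lintegral_congr_ae
  have hnull : (volume : Measure ℝ) ({-(1/4 : ℝ), (1/4 : ℝ)} : Set ℝ) = 0 :=
    Set.Countable.measure_zero (Set.Countable.insert _ (Set.countable_singleton _)) _
  filter_upwards [compl_mem_ae_iff.2 hnull] with x hx
  simp only [Set.mem_compl_iff, Set.mem_insert_iff, Set.mem_singleton_iff, not_or] at hx
  obtain ⟨hx1, hx2⟩ := hx
  by_cases hxA : x ∈ A
  · have hpt : ∀ y : ℝ, ((Prod.fst ⁻¹' A ∩ setD).indicator g) (x, y) =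
        (Set.Icc (-((1/4 - |x|)/9)) ((1/4 - |x|)/9)).indicator
          (fun _ : ℝ => ENNReal.ofReal (9 * Real.cos x ^ 2 / (2 * (1/4 - |x|)))) y := by
      intro y
      have hmem : ((x, y) ∈ Prod.fst ⁻¹' A ∩ setD) ↔
          y ∈ Set.Icc (-((1/4 - |x|)/9)) ((1/4 - |x|)/9) := by
        simp only [Set.mem_inter_iff, Set.mem_preimage, hxA, true_and,
          setD, Set.mem_setOf_eq, Set.mem_Icc]
        constructor
        · intro h
          have h2 := neg_abs_le y
          have h3 := le_abs_self y
          constructor <;> linarith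
        · rintro ⟨h1, h2⟩
          rcases abs_cases y with ⟨he, _⟩ | ⟨he, _⟩ <;> rw [he] <;> linarith
      classical
      rw [Set.indicator_apply, Set.indicator_apply]
      simp only [hmem]
      rfl
    simp only [hg] at hpt
    simp only [hpt]
    rw [lintegral_indicator_const measurableSet_Icc, Real.volume_Icc]
    by_cases hlt : |x| < 1/4
    · have ht : (0:ℝ) < 1/4 - |x| := by linarith
      have hxI : x ∈ Set.Icc (-(1/4 : ℝ)) (1/4) := by
        rw [Set.mem_Icc]
        have h2 := neg_abs_le x
        have h3 := le_abs_self x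
        constructor <;> linarith
      rw [Set.indicator_of_mem (Set.mem_inter hxA hxI)]
      rw [← ENNReal.ofReal_mul (by positivity)]
      congr 1
      have h2t : (2 * (1/4 - |x|) : ℝ) ≠ 0 := by nlinarith
      rw [div_mul_eq_mul_div, div_eq_iff h2t]
      ring
    · have hgt : (1/4 : ℝ) < |x| := by
        rcases lt_or_eq_of_le (not_lt.1 hlt) with h | h
        · exact h
        · exfalso
          rcases abs_cases x with ⟨he, _⟩ | ⟨he, _⟩
          · exact hx2 (by linarith [he ▸ h.symm])
          · exact hx1 (by linarith [he ▸ h.symm])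
      have hxI : x ∉ Set.Icc (-(1/4 : ℝ)) (1/4) := by
        rw [Set.mem_Icc]
        rintro ⟨h1, h2⟩
        rcases abs_cases x with ⟨he, _⟩ | ⟨he, _⟩ <;> rw [he] at hgt <;> linarith
      rw [Set.indicator_of_notMem (fun h => hxI h.2)]
      have : ENNReal.ofReal ((1/4 - |x|)/9 - -((1/4 - |x|)/9)) = 0 :=
        ENNReal.ofReal_eq_zero.2 (by linarith)
      rw [this, mul_zero]
  · have hpt : ∀ y : ℝ, ((Prod.fst ⁻¹' A ∩ setD).indicator g) (x, y) = 0 := by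
      intro y
      apply Set.indicator_of_notMem
      rintro ⟨h, _⟩
      exact hxA h
    simp only [hg] at hpt
    simp only [hpt, lintegral_zero]
    rw [Set.indicator_of_notMem (fun h => hxA h.1)]

lemma restrict_split :
    (volume : Measure ℝ).restrict setS +
      (volume : Measure ℝ).restrict (Set.Icc (-(1 / 4 : ℝ)) (1 / 4)) =
    (volume : Measure ℝ).restrict (Set.Icc (-(π / 2)) (π / 2)) := by
  have hdisj : MeasureTheory.AEDisjoint volume setS (Set.Icc (-(1/4 : ℝ)) (1/4)) := by
    refine measure_mono_null (t := ({-(1/4 : ℝ), (1/4 : ℝ)} : Set ℝ)) ?_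
      (Set.Countable.measure_zero (Set.Countable.insert _ (Set.countable_singleton _)) _)
    rintro x ⟨hS, hI⟩
    rw [Set.mem_Icc] at hI
    simp only [setS, Set.mem_union, Set.mem_Icc] at hS
    simp only [Set.mem_insert_iff, Set.mem_singleton_iff]
    rcases hS with ⟨_, h2⟩ | ⟨h1, _⟩
    · left; linarith
    · right; linarith
  rw [← Measure.restrict_union₀ hdisj measurableSet_Icc.nullMeasurableSet]
  congr 1
  have hpi : (1/4 : ℝ) ≤ π/2 := by nlinarith [Real.pi_gt_three]
  ext x
  simp only [setS, Set.mem_union, Set.mem_Icc]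
  constructor
  · rintro ((⟨h1, h2⟩ | ⟨h1, h2⟩) | ⟨h1, h2⟩) <;> constructor <;> linarith
  · rintro ⟨h1, h2⟩
    rcases le_total x (-(1/4 : ℝ)) with h | h
    · exact Or.inl (Or.inl ⟨h1, h⟩)
    rcases le_total ((1/4 : ℝ)) x with h' | h'
    · exact Or.inl (Or.inr ⟨h', h2⟩)
    · exact Or.inr ⟨by linarith, h'⟩

theorem measN_proj_eq_cos_sq :
    Measure.map Prod.fst measN =
      ((volume : Measure ℝ).restrict (Set.Icc (-(π / 2)) (π / 2))).withDensity
        (fun x => ENNReal.ofReal (Real.cos x ^ 2)) := by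
  rw [measN, Measure.map_add _ _ measurable_fst, part1, part2,
    ← withDensity_add_measure, restrict_split]

end
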